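/- Consider a two-state perturbation on {x, y} with p_ε(x,y) = ε² and p_ε(y,x) = ε^{2+cos(1/ε)} for ε ∈ (0,1] (self-loops completing the rows). Then the unique stationary distribution satisfies μ_ε(x) = 1/(1 + ε^{−cos(1/ε)}), and both liminf_{ε→0} μ_ε(x) = 0 and liminf_{ε→0} μ_ε(y) = 0; hence neither state is stochastically stable. -/

import Mathlib

open Filter

/-- The two-state perturbation: state `0` is `x`, state `1` is `y`;
`p_ε(x,y) = ε²` and `p_ε(y,x) = ε^{2+cos(1/ε)}`. -/
noncomputable def twoStateP (ε : ℝ) : Fin 2 → Fin 2 → ℝ :=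
  ![![1 - ε ^ 2, ε ^ 2],
    ![ε ^ ((2 : ℝ) + Real.cos ε⁻¹), 1 - ε ^ ((2 : ℝ) + Real.cos ε⁻¹)]]

/-- The claimed stationary weights: `μ_ε(x) = 1/(1 + ε^{−cos(1/ε)})`. -/
noncomputable def twoStateMu (ε : ℝ) : Fin 2 → ℝ :=
  ![1 / (1 + ε ^ (-Real.cos ε⁻¹)), 1 - 1 / (1 + ε ^ (-Real.cos ε⁻¹))]

lemma twoStateMu_props (ε : ℝ) (hε : ε ∈ Set.Ioc (0:ℝ) 1) :
      (∀ i, 0 ≤ twoStateMu ε i) ∧ (∑ i, twoStateMu ε i) = 1 ∧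
      (∀ j, ∑ i, twoStateMu ε i * twoStateP ε i j = twoStateMu ε j) ∧
      (∀ ν : Fin 2 → ℝ, (∀ i, 0 ≤ ν i) → (∑ i, ν i) = 1 →
        (∀ j, ∑ i, ν i * twoStateP ε i j = ν j) → ν = twoStateMu ε) := by
  have hεpos := hε.1
  obtain ⟨t, ht⟩ : ∃ t, ε ^ (-Real.cos ε⁻¹) = t := ⟨_, rfl⟩
  obtain ⟨b, hb⟩ : ∃ b, ε ^ ((2:ℝ) + Real.cos ε⁻¹) = b := ⟨_, rfl⟩
  have htpos : 0 < t := ht ▸ Real.rpow_pos_of_pos hεpos _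
  have hbpos : 0 < b := hb ▸ Real.rpow_pos_of_pos hεpos _
  have key : b * t = ε ^ 2 := by
    rw [← ht, ← hb, ← Real.rpow_add hεpos]; norm_num
  have h1t : (0:ℝ) < 1 + t := by linarith
  have hne : (1:ℝ) + t ≠ 0 := ne_of_gt h1t
  refine ⟨?_, ?_, ?_, ?_⟩
  · intro i
    fin_cases i <;> simp [twoStateMu, ht]
    · positivity
    · rw [inv_le_one_iff₀]; right; linarith
  · simp [Fin.sum_univ_two, twoStateMu]
  · intro j
    fin_cases j <;>
      simp only [Fin.sum_univ_two, twoStateMu, twoStateP, Matrix.cons_val_zero,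
        Matrix.cons_val_one, Matrix.head_cons, Matrix.head_fin_const, Fin.isValue, ht, hb,
        Fin.zero_eta, Fin.mk_one] <;>
      field_simp
    · linear_combination key
    · linear_combination -key
  · intro ν hν0 hνsum hνstat
    have h0 := hνstat 0
    simp only [Fin.sum_univ_two, twoStateP, Matrix.cons_val_zero, Matrix.cons_val_one,
      Matrix.head_cons, hb] at h0
    have hsum : ν 0 + ν 1 = 1 := by simpa [Fin.sum_univ_two] using hνsum
    have hb0 : ν 1 * b = ν 0 * ε ^ 2 := by linarith
    have h2 : ν 1 = ν 0 * t := by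
      have h3 : b * (ν 1 - ν 0 * t) = 0 := by linear_combination hb0 - ν 0 * key
      rcases mul_eq_zero.mp h3 with h | h
      · exact absurd h (ne_of_gt hbpos)
      · linarith
    have hv0 : ν 0 = 1 / (1 + t) := by
      rw [eq_div_iff hne]; linarith
    funext i
    fin_cases i <;> simp [twoStateMu, ht]
    · rw [hv0]; rw [one_div]
    · show ν 1 = _
      rw [h2, hv0]; field_simp; ring

lemma twoState_liminf_aux (f : ℝ → ℝ)
    (h0 : ∀ ε ∈ Set.Ioc (0:ℝ) 1, 0 ≤ f ε) (h1 : ∀ ε ∈ Set.Ioc (0:ℝ) 1, f ε ≤ 1)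
    (u : ℕ → ℝ) (hu : Tendsto u atTop (nhdsWithin 0 (Set.Ioc (0:ℝ) 1)))
    (hfu : Tendsto (fun n => f (u n)) atTop (nhds 0)) :
    Filter.liminf f (nhdsWithin 0 (Set.Ioc (0:ℝ) 1)) = 0 := by
  have hne : (nhdsWithin (0:ℝ) (Set.Ioc 0 1)).NeBot := neBot_of_le hu
  have hev : ∀ᶠ ε in nhdsWithin (0:ℝ) (Set.Ioc 0 1), 0 ≤ f ε :=
    eventually_mem_nhdsWithin.mono fun ε hε => h0 ε hε
  have hbdd : IsBoundedUnder (· ≥ ·) (nhdsWithin (0:ℝ) (Set.Ioc 0 1)) f :=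
    isBoundedUnder_of_eventually_ge hev
  have hev1 : ∀ᶠ ε in nhdsWithin (0:ℝ) (Set.Ioc 0 1), f ε ≤ 1 :=
    eventually_mem_nhdsWithin.mono fun ε hε => h1 ε hε
  have hcb : IsCoboundedUnder (· ≥ ·) (nhdsWithin (0:ℝ) (Set.Ioc 0 1)) f :=
    (isBoundedUnder_of_eventually_le hev1).isCoboundedUnder_ge
  refine le_antisymm ?_ (le_liminf_of_le hcb hev)
  refine le_of_forall_pos_le_add fun δ hδ => ?_
  rw [zero_add]
  refine liminf_le_of_frequently_le ?_ hbdd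
  exact hu.frequently ((hfu.eventually (eventually_le_nhds hδ)).frequently)

theorem twoState_no_stable_state :
    (∀ ε ∈ Set.Ioc (0 : ℝ) 1,
      (∀ i, 0 ≤ twoStateMu ε i) ∧ (∑ i, twoStateMu ε i) = 1 ∧
      (∀ j, ∑ i, twoStateMu ε i * twoStateP ε i j = twoStateMu ε j) ∧
      (∀ ν : Fin 2 → ℝ, (∀ i, 0 ≤ ν i) → (∑ i, ν i) = 1 →
        (∀ j, ∑ i, ν i * twoStateP ε i j = ν j) → ν = twoStateMu ε)) ∧
    Filter.liminf (fun ε => twoStateMu ε 0) (nhdsWithin 0 (Set.Ioc 0 1)) = 0 ∧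
    Filter.liminf (fun ε => twoStateMu ε 1) (nhdsWithin 0 (Set.Ioc 0 1)) = 0 := by
  have pi_pos := Real.pi_pos
  have pi_gt := Real.pi_gt_three
  have hbound : ∀ i, ∀ ε ∈ Set.Ioc (0:ℝ) 1, 0 ≤ twoStateMu ε i ∧ twoStateMu ε i ≤ 1 := by
    intro i ε hε
    obtain ⟨hpos, hsum, -, -⟩ := twoStateMu_props ε hε
    refine ⟨hpos i, ?_⟩
    have h0 := hpos 0; have h1 := hpos 1
    simp [Fin.sum_univ_two] at hsum
    fin_cases i
    · show twoStateMu ε 0 ≤ 1; linarith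
    · show twoStateMu ε 1 ≤ 1; linarith
  refine ⟨twoStateMu_props, ?_, ?_⟩
  · -- liminf of μ(x), along ε_n = 1/(2π(n+1)) where cos(1/ε_n) = 1
    set u : ℕ → ℝ := fun n => (2 * Real.pi * ((n:ℝ) + 1))⁻¹ with hu_def
    have hXpos : ∀ n : ℕ, 0 < 2 * Real.pi * ((n:ℝ) + 1) := by
      intro n; positivity
    have hX1 : ∀ n : ℕ, 1 ≤ 2 * Real.pi * ((n:ℝ) + 1) := by
      intro n
      have hn : (0:ℝ) ≤ (n:ℝ) := Nat.cast_nonneg n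
      nlinarith
    have hmem : ∀ n, u n ∈ Set.Ioc (0:ℝ) 1 := by
      intro n
      exact ⟨inv_pos.mpr (hXpos n), inv_le_one_of_one_le₀ (hX1 n)⟩
    have hcos : ∀ n : ℕ, Real.cos (u n)⁻¹ = 1 := by
      intro n
      have : (u n)⁻¹ = ((n + 1 : ℕ) : ℝ) * (2 * Real.pi) := by
        rw [hu_def, inv_inv]; push_cast; ring
      rw [this, Real.cos_nat_mul_two_pi]
    have hval : ∀ n : ℕ, twoStateMu (u n) 0 = 1 / (1 + 2 * Real.pi * ((n:ℝ) + 1)) := by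
      intro n
      have h1 : (u n) ^ (-Real.cos (u n)⁻¹) = 2 * Real.pi * ((n:ℝ) + 1) := by
        rw [hcos n]
        rw [show -(1:ℝ) = ((-1 : ℤ) : ℝ) by norm_num, Real.rpow_intCast, zpow_neg_one, hu_def,
          inv_inv]
      simp [twoStateMu, h1]
    have htop : Tendsto (fun n : ℕ => 2 * Real.pi * ((n:ℝ) + 1)) atTop atTop := by
      apply Tendsto.const_mul_atTop (by positivity : (0:ℝ) < 2 * Real.pi)
      exact tendsto_atTop_add_const_right _ 1 tendsto_natCast_atTop_atTop
    have hu0 : Tendsto u atTop (nhds 0) := tendsto_inv_atTop_zero.comp htop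
    have hu : Tendsto u atTop (nhdsWithin 0 (Set.Ioc (0:ℝ) 1)) :=
      tendsto_nhdsWithin_iff.mpr ⟨hu0, Eventually.of_forall hmem⟩
    refine twoState_liminf_aux _ (fun ε hε => (hbound 0 ε hε).1) (fun ε hε => (hbound 0 ε hε).2)
      u hu ?_
    have hsq : ∀ n, twoStateMu (u n) 0 ≤ u n := by
      intro n
      rw [hval n, hu_def]
      rw [div_le_iff₀ (by linarith [hXpos n])]
      rw [inv_mul_eq_div, le_div_iff₀ (hXpos n)]
      nlinarith [hXpos n, hX1 n]
    exact squeeze_zero (fun n => (hbound 0 _ (hmem n)).1) hsq hu0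
  · -- liminf of μ(y), along ε_n = 1/((2n+1)π) where cos(1/ε_n) = -1
    set v : ℕ → ℝ := fun n => ((2 * (n:ℝ) + 1) * Real.pi)⁻¹ with hv_def
    have hXpos : ∀ n : ℕ, 0 < (2 * (n:ℝ) + 1) * Real.pi := by
      intro n; positivity
    have hX1 : ∀ n : ℕ, 1 ≤ (2 * (n:ℝ) + 1) * Real.pi := by
      intro n
      have hn : (0:ℝ) ≤ (n:ℝ) := Nat.cast_nonneg n
      nlinarith
    have hmem : ∀ n, v n ∈ Set.Ioc (0:ℝ) 1 := by
      intro n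
      exact ⟨inv_pos.mpr (hXpos n), inv_le_one_of_one_le₀ (hX1 n)⟩
    have hvpos : ∀ n, 0 < v n := fun n => (hmem n).1
    have hcos : ∀ n : ℕ, Real.cos (v n)⁻¹ = -1 := by
      intro n
      have : (v n)⁻¹ = (n : ℝ) * (2 * Real.pi) + Real.pi := by
        rw [hv_def, inv_inv]; ring
      rw [this, Real.cos_nat_mul_two_pi_add_pi]
    have hval : ∀ n : ℕ, twoStateMu (v n) 1 = 1 - 1 / (1 + v n) := by
      intro n
      have h1 : (v n) ^ (-Real.cos (v n)⁻¹) = v n := by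
        rw [hcos n, neg_neg, Real.rpow_one]
      simp [twoStateMu, h1]
    have htop : Tendsto (fun n : ℕ => (2 * (n:ℝ) + 1) * Real.pi) atTop atTop := by
      apply Tendsto.atTop_mul_const pi_pos
      apply tendsto_atTop_add_const_right
      exact Tendsto.const_mul_atTop (by norm_num) tendsto_natCast_atTop_atTop
    have hv0 : Tendsto v atTop (nhds 0) := tendsto_inv_atTop_zero.comp htop
    have hv : Tendsto v atTop (nhdsWithin 0 (Set.Ioc (0:ℝ) 1)) :=
      tendsto_nhdsWithin_iff.mpr ⟨hv0, Eventually.of_forall hmem⟩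
    refine twoState_liminf_aux _ (fun ε hε => (hbound 1 ε hε).1) (fun ε hε => (hbound 1 ε hε).2)
      v hv ?_
    have hsq : ∀ n, twoStateMu (v n) 1 ≤ v n := by
      intro n
      rw [hval n]
      have h1v : (0:ℝ) < 1 + v n := by linarith [hvpos n]
      have h2 : (1:ℝ) - v n ≤ 1 / (1 + v n) := by
        rw [le_div_iff₀ h1v]
        nlinarith [hvpos n]
      linarith
    exact squeeze_zero (fun n => (hbound 1 _ (hmem n)).1) hsq hv0
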